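/- For all 1 ≤ i,j ≤ n, k ∈ ℤ, and nonzero l ∈ ℤ, the commutator identity [a_i(l), x_j⁺(k)] = ([(α_i|α_j)·l]/l) · x_j⁺(k+l) holds in M_{n+1}(R). -/

import Mathlib

set_option maxHeartbeats 1000000
noncomputable section

open LaurentPolynomial

/-- The base field `F = ℚ(q)`. -/
abbrev F : Type := RatFunc ℚ

/-- The Laurent polynomial ring `R = F[z, z⁻¹]`. -/
abbrev R : Type := LaurentPolynomial F

/-- The generator `q` of `ℚ(q)`. -/
def q : F := RatFunc.X

/-- The quantum integer `[m] = (q^m − q^{−m})/(q − q^{−1})`. -/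
def qint (m : ℤ) : F := (q ^ m - q ^ (-m)) / (q - q⁻¹)

/-- The A_n inner product `(α_i|α_j)` on simple roots (1-based indices). -/
def ip (i j : ℕ) : ℤ := if i = j then 2 else if i + 1 = j ∨ j + 1 = i then -1 else 0

/-- The matrix unit `E_{ab} ∈ M_N(R)`, with 1-based labels `a b`. -/
def E (N a b : ℕ) : Matrix (Fin N) (Fin N) R :=
  Matrix.of fun r s => if (r : ℕ) + 1 = a ∧ (s : ℕ) + 1 = b then (1 : R) else 0

/-- The element `(q^c z)^k ∈ R`. -/
def zq (c k : ℤ) : R := C (q ^ (c * k)) * T k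

/-- `x_j⁺(k) = (q^j z)^k E_{j,j+1}` in `M_{n+1}(R)`. -/
def xp (n j : ℕ) (k : ℤ) : Matrix (Fin (n+1)) (Fin (n+1)) R :=
  zq j k • E (n+1) j (j+1)

/-- `x_j⁻(k) = (q^j z)^k E_{j+1,j}` in `M_{n+1}(R)`. -/
def xm (n j : ℕ) (k : ℤ) : Matrix (Fin (n+1)) (Fin (n+1)) R :=
  zq j k • E (n+1) (j+1) j

/-- `a_j(l) = ([l]/l)(q^j z)^l (q^{−l}E_{j,j} − q^l E_{j+1,j+1})` in `M_{n+1}(R)`. -/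
def aop (n j : ℕ) (l : ℤ) : Matrix (Fin (n+1)) (Fin (n+1)) R :=
  (C (qint l / (l : F)) * zq j l) •
    (C (q ^ (-l)) • E (n+1) j j - C (q ^ l) • E (n+1) (j+1) (j+1))

lemma E_mul_ne {N a b c d : ℕ} (h : b ≠ c) : E N a b * E N c d = 0 := by
  apply Matrix.ext; intro r s
  simp only [Matrix.mul_apply, E, Matrix.of_apply, Matrix.zero_apply]
  apply Finset.sum_eq_zero
  intro t _
  split_ifs with h1 h2 <;> simp_all

lemma E_mul_same {N a b d : ℕ} (h1 : 1 ≤ b) (h2 : b ≤ N) : E N a b * E N b d = E N a d := by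
  apply Matrix.ext; intro r s
  simp only [Matrix.mul_apply, E, Matrix.of_apply]
  rw [Finset.sum_eq_single (⟨b - 1, by omega⟩ : Fin N)]
  · have : (b - 1) + 1 = b := by omega
    split_ifs <;> simp_all
  · intro t _ ht
    have : (t : ℕ) + 1 ≠ b := by
      intro h; apply ht; ext; simp; omega
    split_ifs <;> simp_all
  · simp

lemma hq : q ≠ 0 := RatFunc.X_ne_zero

lemma qint_neg (l : ℤ) : qint (-l) = - qint l := by
  unfold qint; rw [neg_neg, ← neg_div]; ring_nf

lemma qint_two (l : ℤ) : qint (2*l) = qint l * (q ^ l + q ^ (-l)) := by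
  unfold qint
  rw [div_mul_eq_mul_div]
  congr 1
  rw [show (2:ℤ)*l = l + l by ring, show -(l + l) = -l + -l by ring,
    zpow_add₀ hq, zpow_add₀ hq]
  ring

/-- `[a_i(l), x_j⁺(k)] = ([(α_i|α_j)l]/l) x_j⁺(k+l)` in `M_{n+1}(R)`. -/
theorem a_xp_comm (n : ℕ) (hn : 1 ≤ n) (i j : ℕ) (hi1 : 1 ≤ i) (hin : i ≤ n)
    (hj1 : 1 ≤ j) (hjn : j ≤ n) (k l : ℤ) (hl : l ≠ 0) :
    aop n i l * xp n j k - xp n j k * aop n i l =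
      C (qint (ip i j * l) / (l : F)) • xp n j (k + l) := by
  by_cases hij : i = j
  · subst hij
    have e1 : E (n+1) i i * E (n+1) i (i+1) = E (n+1) i (i+1) := E_mul_same hi1 (by omega)
    have e2 : E (n+1) (i+1) (i+1) * E (n+1) i (i+1) = 0 := E_mul_ne (by omega)
    have e3 : E (n+1) i (i+1) * E (n+1) i i = 0 := E_mul_ne (by omega)
    have e4 : E (n+1) i (i+1) * E (n+1) (i+1) (i+1) = E (n+1) i (i+1) := E_mul_same (by omega) (by omega)
    simp only [aop, xp, ip, if_pos rfl, Matrix.smul_mul, Matrix.mul_smul, sub_mul, mul_sub,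
      e1, e2, e3, e4, smul_smul, smul_zero, sub_zero, zero_sub, smul_neg, sub_neg_eq_add,
      smul_sub, reduceIte]
    rw [← add_smul]
    congr 1
    have hC : ∀ r : F, (C r : R) = AddMonoidAlgebra.single 0 r := by
      intro r; rw [single_eq_C_mul_T, T_zero, mul_one]
    simp only [zq, hC, LaurentPolynomial.T, AddMonoidAlgebra.single_mul_single]
    simp only [zero_add, add_zero, mul_one]
    rw [show l + k = k + l from add_comm l k, ← AddMonoidAlgebra.single_add]
    congr 1
    rw [qint_two, show (i:ℤ) * (k+l) = i*k + i*l by ring, zpow_add₀ hq]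
    ring
  · by_cases hji : i = j + 1
    · subst hji
      have e1 : E (n+1) (j+1) (j+1) * E (n+1) j (j+1) = 0 := E_mul_ne (by omega)
      have e2 : E (n+1) (j+1+1) (j+1+1) * E (n+1) j (j+1) = 0 := E_mul_ne (by omega)
      have e3 : E (n+1) j (j+1) * E (n+1) (j+1) (j+1) = E (n+1) j (j+1) := E_mul_same (by omega) (by omega)
      have e4 : E (n+1) j (j+1) * E (n+1) (j+1+1) (j+1+1) = 0 := E_mul_ne (by omega)
      have hip : ip (j+1) j = -1 := by unfold ip; split_ifs <;> omega
      simp only [aop, xp, hip, Matrix.smul_mul, Matrix.mul_smul, sub_mul, mul_sub,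
        e1, e2, e3, e4, smul_smul, smul_zero, sub_zero, zero_sub, smul_neg, sub_neg_eq_add,
        smul_sub, neg_smul, zero_smul]
      rw [← neg_smul]
      congr 1
      rw [show (-1:ℤ)*l = -l by ring, qint_neg, neg_div, map_neg]
      simp only [neg_mul]
      rw [neg_inj]
      have hC : ∀ r : F, (C r : R) = AddMonoidAlgebra.single 0 r := by
        intro r; rw [single_eq_C_mul_T, T_zero, mul_one]
      simp only [zq, hC, LaurentPolynomial.T, AddMonoidAlgebra.single_mul_single]
      push_cast
      simp only [zero_add, add_zero, mul_one]
      rw [show l + k = k + l from add_comm l k]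
      congr 1
      rw [show ((j:ℤ)+1)*l = j*l + l by ring,
        show (j:ℤ)*(k+l) = j*k + j*l by ring,
        zpow_add₀ hq, zpow_add₀ hq]
      have h1 : q ^ l * q ^ (-l) = 1 := by
        rw [← zpow_add₀ hq, add_neg_cancel, zpow_zero]
      linear_combination (qint l / (l:F) * q^((j:ℤ)*l) * q^((j:ℤ)*k)) * h1
    · by_cases hij2 : j = i + 1
      · subst hij2
        have e1 : E (n+1) i i * E (n+1) (i+1) (i+1+1) = 0 := E_mul_ne (by omega)
        have e2 : E (n+1) (i+1) (i+1) * E (n+1) (i+1) (i+1+1) = E (n+1) (i+1) (i+1+1) := E_mul_same (by omega) (by omega)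
        have e3 : E (n+1) (i+1) (i+1+1) * E (n+1) i i = 0 := E_mul_ne (by omega)
        have e4 : E (n+1) (i+1) (i+1+1) * E (n+1) (i+1) (i+1) = 0 := E_mul_ne (by omega)
        have hip : ip i (i+1) = -1 := by unfold ip; split_ifs <;> omega
        simp only [aop, xp, hip, Matrix.smul_mul, Matrix.mul_smul, sub_mul, mul_sub,
          e1, e2, e3, e4, smul_smul, smul_zero, sub_zero, zero_sub, smul_neg, sub_neg_eq_add,
          smul_sub, neg_smul, zero_smul]
        rw [← neg_smul]
        congr 1
        have hC : ∀ r : F, (C r : R) = AddMonoidAlgebra.single 0 r := by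
          intro r; rw [single_eq_C_mul_T, T_zero, mul_one]
        simp only [zq, hC, LaurentPolynomial.T, AddMonoidAlgebra.single_mul_single]
        push_cast
        simp only [zero_add, add_zero, mul_one]
        rw [← AddMonoidAlgebra.single_neg]
        congr 1
        rw [show (-1:ℤ)*l = -l by ring, qint_neg,
          show ((i:ℤ)+1)*k = i*k + k by ring,
          show ((i:ℤ)+1)*(k+l) = (i*k + k) + (i*l + l) by ring,
          zpow_add₀ hq, zpow_add₀ hq, zpow_add₀ hq, zpow_add₀ hq]
        ring
      · have e1 : E (n+1) i i * E (n+1) j (j+1) = 0 := E_mul_ne (by omega)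
        have e2 : E (n+1) (i+1) (i+1) * E (n+1) j (j+1) = 0 := E_mul_ne (by omega)
        have e3 : E (n+1) j (j+1) * E (n+1) i i = 0 := E_mul_ne (by omega)
        have e4 : E (n+1) j (j+1) * E (n+1) (i+1) (i+1) = 0 := E_mul_ne (by omega)
        have hip : ip i j = 0 := by unfold ip; split_ifs <;> omega
        have h0 : qint 0 = 0 := by simp [qint]
        simp only [aop, xp, hip, Matrix.smul_mul, Matrix.mul_smul, sub_mul, mul_sub,
          e1, e2, e3, e4, smul_zero, sub_zero, zero_mul, h0, map_zero, zero_div, zero_smul, sub_self]
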